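/- Every GQC code C of block lengths (m_1,...,m_l) over Z4 admits a set of l generators a_1,...,a_l as a Z4[x]-submodule of R, in upper triangular form: a_i = (F_{i,1}|...|F_{i,i}|0|...|0), where each diagonal entry has the form F_{i,i} = f_{i,i}(x)+2g_{i,i}(x) with f_{i,i}, g_{i,i} monic polynomials over Z4 satisfying g_{i,i}(x) | f_{i,i}(x) | x^{m_i}−1. -/

import Mathlib

open Polynomial

/-- The quotient ring `(ℤ/4)[x]/(x^k - 1)`. -/
abbrev R4 (k : ℕ) : Type :=
  Polynomial (ZMod 4) ⧸ (Ideal.span {(X : Polynomial (ZMod 4)) ^ k - 1})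

noncomputable section
def ρ : ZMod 4 →+* ZMod 2 := ZMod.castHom (by decide : (2:ℕ) ∣ 4) (ZMod 2)
def φ : Polynomial (ZMod 4) →+* Polynomial (ZMod 2) := Polynomial.mapRingHom ρ

lemma coeff_φ (c : Polynomial (ZMod 4)) (n : ℕ) : (φ c).coeff n = ρ (c.coeff n) := by
  simp [φ, coeff_map]

lemma ρ_apply (a : ZMod 4) : ρ a = ZMod.cast a := ZMod.castHom_apply a

lemma two_eq_zero_iff (a : ZMod 4) : 2 * a = 0 ↔ ρ a = 0 := by
  rw [ρ_apply]; revert a; decide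

instance : Nontrivial (ZMod 4) := ⟨0, 2, by decide⟩

def half : ZMod 4 → ZMod 4 := fun a => if a = 2 then 1 else 0

lemma half_spec : ∀ a : ZMod 4, ρ a = 0 → a = 2 * half a := by
  simp only [ρ_apply]; decide

lemma L1 (c : Polynomial (ZMod 4)) : 2 * c = 0 ↔ φ c = 0 := by
  simp only [Polynomial.ext_iff, coeff_φ, coeff_ofNat_mul, coeff_zero]
  exact forall_congr' fun n => two_eq_zero_iff _

lemma L2 {c : Polynomial (ZMod 4)} (h : φ c = 0) : ∃ d, c = 2 * d := by
  refine ⟨⟨⟨Finsupp.mapRange half (by decide) c.toFinsupp.coeff⟩⟩, ?_⟩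
  ext n
  have hc : ρ (c.coeff n) = 0 := by rw [← coeff_φ, h, coeff_zero]
  rw [coeff_ofNat_mul]
  conv_rhs => rw [coeff_ofFinsupp, AddMonoidAlgebra.coeff_ofCoeff, Finsupp.mapRange_apply]
  exact half_spec _ hc

lemma ρ_surj : Function.Surjective ρ := by
  intro b; fin_cases b
  · exact ⟨0, map_zero ρ⟩
  · exact ⟨1, map_one ρ⟩

lemma φ_surj : Function.Surjective φ := Polynomial.map_surjective ρ ρ_surj

lemma two_poly_eq_zero : (2 : Polynomial (ZMod 2)) = 0 := CharTwo.two_eq_zero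

lemma φ_two_mul (p : Polynomial (ZMod 4)) : φ (2 * p) = 0 := by
  rw [map_mul, map_ofNat, two_poly_eq_zero, zero_mul]

lemma degree_two_mul_le (p : Polynomial (ZMod 4)) : (2 * p).degree ≤ p.degree := by
  calc (2 * p).degree ≤ (2 : Polynomial (ZMod 4)).degree + p.degree := degree_mul_le _ _
  _ ≤ 0 + p.degree := by
      gcongr
      rw [(map_ofNat (C : ZMod 4 →+* Polynomial (ZMod 4)) 2).symm]
      exact degree_C_le
  _ = p.degree := by rw [zero_add]

lemma lifts_all (p : Polynomial (ZMod 2)) : p ∈ Polynomial.lifts ρ := by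
  obtain ⟨q, hq⟩ := φ_surj p
  exact (Polynomial.mem_lifts _).2 ⟨q, hq⟩

lemma four_poly_eq_zero : (4 : Polynomial (ZMod 4)) = 0 := by
  rw [← map_ofNat (C : ZMod 4 →+* Polynomial (ZMod 4)) 4,
    show (4 : ZMod 4) = 0 by decide, map_zero]

lemma hensel {T : Polynomial (ZMod 4)} (hT : T.Monic) {g' h' : Polynomial (ZMod 2)}
    (hg' : g'.Monic) (hh' : h'.Monic) (hfact : φ T = g' * h') (hcop : IsCoprime g' h') :
    ∃ g h : Polynomial (ZMod 4), g.Monic ∧ h.Monic ∧ φ g = g' ∧ φ h = h' ∧ T = g * h := by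
  obtain ⟨g0, hg0map, hg0deg, hg0m⟩ :=
    Polynomial.lifts_and_degree_eq_and_monic (lifts_all g') hg'
  obtain ⟨h0, hh0map, hh0deg, hh0m⟩ :=
    Polynomial.lifts_and_degree_eq_and_monic (lifts_all h') hh'
  have hφg0 : φ g0 = g' := hg0map
  have hφh0 : φ h0 = h' := hh0map
  have hE : φ (T - g0 * h0) = 0 := by
    rw [map_sub, map_mul, hφg0, hφh0, hfact, sub_self]
  obtain ⟨e, he⟩ := L2 hE
  set e' := φ e with he'
  have hdT : T.degree = g'.degree + h'.degree := by
    have hmapdeg : (φ T).degree = T.degree := by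
      show (Polynomial.map ρ T).degree = T.degree
      exact hT.degree_map ρ
    rw [← hmapdeg, hfact, hh'.degree_mul]
  have hdg0h0 : (g0 * h0).degree = T.degree := by
    rw [hh0m.degree_mul, hg0deg, hh0deg, hdT]
  have hde : e'.degree < T.degree := by
    have hTne : T ≠ 0 := hT.ne_zero
    have hdTn : T.degree = (T.natDegree : WithBot ℕ) := (degree_eq_natDegree hTne)
    rw [hdTn, degree_lt_iff_coeff_zero]
    intro m hm
    have hsub : (T - g0 * h0).coeff m = 0 := by
      rcases eq_or_ne (T - g0 * h0) 0 with h0' | h0'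
      · rw [h0', coeff_zero]
      · refine coeff_eq_zero_of_degree_lt
          (lt_of_lt_of_le (degree_sub_lt hdg0h0.symm hTne
            (by rw [hT.leadingCoeff, (hg0m.mul hh0m).leadingCoeff])) ?_)
        rw [hdTn]
        exact_mod_cast hm
    have h2 : 2 * e.coeff m = 0 := by
      have := congrArg (fun p => Polynomial.coeff p m) he
      simp only [coeff_ofNat_mul] at this
      rw [← this, hsub]
    rw [he', coeff_φ]
    exact (two_eq_zero_iff _).1 h2
  obtain ⟨a, b, hab⟩ := hcop
  set p' := (b * e') %ₘ g' with hp'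
  set q' := a * e' + ((b * e') /ₘ g') * h' with hq'
  have hmd := modByMonic_add_div (b * e') g'
  have hiden : p' * h' + q' * g' = e' := by
    calc p' * h' + q' * g'
        = (p' + g' * ((b * e') /ₘ g')) * h' + (a * e') * g' := by ring
      _ = (b * e') * h' + (a * e') * g' := by rw [hmd]
      _ = e' * (a * g' + b * h') := by ring
      _ = e' := by rw [hab, mul_one]
  have hdp : p'.degree < g'.degree := degree_modByMonic_lt _ hg'
  have hgbot : g'.degree ≠ ⊥ := fun hb => hg'.ne_zero (degree_eq_bot.mp hb)
  have hhbot : h'.degree ≠ ⊥ := fun hb => hh'.ne_zero (degree_eq_bot.mp hb)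
  have hdq : q'.degree < h'.degree := by
    rcases eq_or_ne q' 0 with hq0 | hq0
    · rw [hq0, degree_zero]
      exact Ne.bot_lt hhbot
    · have hq'g : q' * g' = e' - p' * h' := by linear_combination hiden
      have hd1 : (e' - p' * h').degree < g'.degree + h'.degree := by
        refine lt_of_le_of_lt (degree_sub_le _ _) (max_lt ?_ ?_)
        · rw [← hdT]; exact hde
        · exact lt_of_le_of_lt (degree_mul_le _ _) (WithBot.add_lt_add_right hhbot hdp)
      have hd2 : q'.degree + g'.degree < g'.degree + h'.degree := by
        rw [← degree_mul, hq'g]; exact hd1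
      rw [add_comm g'.degree] at hd2
      exact lt_of_add_lt_add_right hd2
  obtain ⟨p, hpmap, hpdeg⟩ := Polynomial.mem_lifts_and_degree_eq (lifts_all p')
  obtain ⟨q, hqmap, hqdeg⟩ := Polynomial.mem_lifts_and_degree_eq (lifts_all q')
  have hφp : φ p = p' := hpmap
  have hφq : φ q = q' := hqmap
  refine ⟨g0 + 2 * p, h0 + 2 * q, ?_, ?_, ?_, ?_, ?_⟩
  · exact hg0m.add_of_left (lt_of_le_of_lt (degree_two_mul_le p) (by rw [hpdeg, hg0deg]; exact hdp))
  · exact hh0m.add_of_left (lt_of_le_of_lt (degree_two_mul_le q) (by rw [hqdeg, hh0deg]; exact hdq))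
  · rw [map_add, hφg0, φ_two_mul, add_zero]
  · rw [map_add, hφh0, φ_two_mul, add_zero]
  · have hzero : 2 * (p * h0 + q * g0 - e) = 0 := by
      rw [L1, map_sub, map_add, map_mul, map_mul, hφp, hφq, hφg0, hφh0, ← he']
      rw [hiden, sub_self]
    have h4 : (2 * p) * (2 * q) = 0 := by
      have : (2 * p) * (2 * q) = 4 * (p * q) := by ring
      rw [this, four_poly_eq_zero, zero_mul]
    have : T - (g0 + 2 * p) * (h0 + 2 * q)
        = (T - g0 * h0) - 2 * (p * h0 + q * g0) - (2 * p) * (2 * q) := by ring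
    rw [h4, sub_zero, he] at this
    have : T - (g0 + 2 * p) * (h0 + 2 * q) = -(2 * (p * h0 + q * g0 - e)) := by
      rw [this]; ring
    rw [hzero, neg_zero, sub_eq_zero] at this
    exact this

lemma monic_of_ne_zero_F2 {p : Polynomial (ZMod 2)} (hp : p ≠ 0) : p.Monic := by
  have h1 : p.leadingCoeff ≠ 0 := leadingCoeff_ne_zero.2 hp
  have : ∀ a : ZMod 2, a ≠ 0 → a = 1 := by decide
  exact this _ h1

lemma sep_Xk {k : ℕ} (hk : Odd k) : (X ^ k - 1 : Polynomial (ZMod 2)).Separable := by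
  have h1 : ((k : ZMod 2)) ≠ 0 := by
    rw [Ne, ZMod.natCast_eq_zero_iff]
    exact (Nat.not_even_iff_odd.2 hk) ∘ (even_iff_two_dvd).2
  have := Polynomial.separable_X_pow_sub_C (F := ZMod 2) (n := k) 1 h1 one_ne_zero
  simpa using this

lemma monic_Xk4 {k : ℕ} (hk : Odd k) : (X ^ k - 1 : Polynomial (ZMod 4)).Monic := by
  have : (X ^ k - 1 : Polynomial (ZMod 4)) = X ^ k - C 1 := by rw [C_1]
  rw [this]
  exact monic_X_pow_sub_C 1 hk.pos.ne'

lemma φ_Xk (k : ℕ) : φ (X ^ k - 1) = X ^ k - 1 := by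
  rw [map_sub, map_pow, map_one]
  congr 1
  show Polynomial.map ρ X ^ k = X ^ k
  rw [map_X]

lemma eq_mul_div {w d : Polynomial (ZMod 2)} (hd : d.Monic) (hdvd : d ∣ w) :
    w = d * (w /ₘ d) := by
  have := modByMonic_add_div w d
  rw [(modByMonic_eq_zero_iff_dvd hd).2 hdvd, zero_add] at this
  exact this.symm

lemma monic_Xk2 {k : ℕ} (hk : Odd k) : (X ^ k - 1 : Polynomial (ZMod 2)).Monic := by
  have : (X ^ k - 1 : Polynomial (ZMod 2)) = X ^ k - C 1 := by rw [C_1]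
  rw [this]
  exact monic_X_pow_sub_C 1 hk.pos.ne'

lemma two_mul_eq_of_φ_eq {c d : Polynomial (ZMod 4)} (h : φ c = φ d) : 2 * c = 2 * d := by
  have h0 : φ (c - d) = 0 := by rw [map_sub, h, sub_self]
  have := (L1 _).2 h0
  rw [mul_sub, sub_eq_zero] at this
  exact this

lemma ideal_structure {k : ℕ} (hk : Odd k)
    (N : Submodule (Polynomial (ZMod 4)) (R4 k)) :
    ∃ f g : Polynomial (ZMod 4), f.Monic ∧ g.Monic ∧ g ∣ f ∧ f ∣ X ^ k - 1 ∧
      N = Submodule.span (Polynomial (ZMod 4))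
        {Ideal.Quotient.mk (Ideal.span {(X : Polynomial (ZMod 4)) ^ k - 1}) (f + 2 * g)} := by
  set I : Ideal (Polynomial (ZMod 4)) := Ideal.span {(X : Polynomial (ZMod 4)) ^ k - 1} with hI
  set mkL : Polynomial (ZMod 4) →ₗ[Polynomial (ZMod 4)] R4 k :=
    (Ideal.Quotient.mkₐ (Polynomial (ZMod 4)) I).toLinearMap with hmkL
  set J : Ideal (Polynomial (ZMod 4)) := Submodule.comap mkL N with hJ
  have hmemJ : ∀ b, b ∈ J ↔ Ideal.Quotient.mk I b ∈ N := fun b => Iff.rfl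
  have hXI : (X : Polynomial (ZMod 4)) ^ k - 1 ∈ I := Ideal.subset_span rfl
  have hX : (X : Polynomial (ZMod 4)) ^ k - 1 ∈ J := by
    rw [hmemJ, Ideal.Quotient.eq_zero_iff_mem.2 hXI]
    exact N.zero_mem
  -- the mod 2 ideals
  set Jm : Ideal (Polynomial (ZMod 2)) := Ideal.map φ J with hJm
  set K : Ideal (Polynomial (ZMod 4)) :=
    Submodule.comap (LinearMap.mulLeft (Polynomial (ZMod 4)) 2) J with hK
  have hmemK : ∀ b, b ∈ K ↔ 2 * b ∈ J := fun b => Iff.rfl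
  set Km : Ideal (Polynomial (ZMod 2)) := Ideal.map φ K with hKm
  have hJK : J ≤ K := fun b hb => by
    rw [hmemK]; exact Ideal.mul_mem_left J 2 hb
  set f' : Polynomial (ZMod 2) := Submodule.IsPrincipal.generator Jm with hf'
  set g' : Polynomial (ZMod 2) := Submodule.IsPrincipal.generator Km with hg'
  have hJmSpan : Jm = Ideal.span {f'} := (Ideal.span_singleton_generator Jm).symm
  have hKmSpan : Km = Ideal.span {g'} := (Ideal.span_singleton_generator Km).symm
  have hXJm : (X ^ k - 1 : Polynomial (ZMod 2)) ∈ Jm := by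
    rw [← φ_Xk k]; exact Ideal.mem_map_of_mem φ hX
  have hfX : f' ∣ (X ^ k - 1 : Polynomial (ZMod 2)) := by
    rw [hJmSpan, Ideal.mem_span_singleton] at hXJm; exact hXJm
  have hXk2ne : (X ^ k - 1 : Polynomial (ZMod 2)) ≠ 0 := (monic_Xk2 hk).ne_zero
  have hf'ne : f' ≠ 0 := fun h => hXk2ne (by
    obtain ⟨c, hc⟩ := hfX; rw [hc, h, zero_mul])
  have hgf : g' ∣ f' := by
    have : f' ∈ Km := Ideal.map_mono hJK (Submodule.IsPrincipal.generator_mem Jm)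
    rw [hKmSpan, Ideal.mem_span_singleton] at this; exact this
  have hg'ne : g' ≠ 0 := fun h => hf'ne (by
    obtain ⟨c, hc⟩ := hgf; rw [hc, h, zero_mul])
  have hf'm : f'.Monic := monic_of_ne_zero_F2 hf'ne
  have hg'm : g'.Monic := monic_of_ne_zero_F2 hg'ne
  -- the cofactors
  set u' : Polynomial (ZMod 2) := f' /ₘ g' with hu'
  set v' : Polynomial (ZMod 2) := (X ^ k - 1) /ₘ f' with hv'
  set w' : Polynomial (ZMod 2) := (X ^ k - 1) /ₘ g' with hw'
  have hfu : f' = g' * u' := eq_mul_div hg'm hgf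
  have hfv : (X ^ k - 1 : Polynomial (ZMod 2)) = f' * v' := eq_mul_div hf'm hfX
  have hgw : (X ^ k - 1 : Polynomial (ZMod 2)) = g' * w' := eq_mul_div hg'm (hgf.trans hfX)
  have hw_uv : w' = u' * v' := by
    have : g' * w' = g' * (u' * v') := by rw [← hgw, hfv, hfu]; ring
    exact mul_left_cancel₀ hg'ne this
  have hsep : (X ^ k - 1 : Polynomial (ZMod 2)).Separable := sep_Xk hk
  have hw'm : w'.Monic := hg'm.of_mul_monic_left (hgw ▸ monic_Xk2 hk)
  have hu'm : u'.Monic := hg'm.of_mul_monic_left (hfu ▸ hf'm)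
  have hv'm : v'.Monic := hf'm.of_mul_monic_left (hfv ▸ monic_Xk2 hk)
  have hcop_gw : IsCoprime g' w' := Polynomial.Separable.isCoprime (hgw ▸ hsep)
  have huv_dvd : u' * v' ∣ (X ^ k - 1 : Polynomial (ZMod 2)) := ⟨g', by rw [hgw, hw_uv]; ring⟩
  have hcop_uv : IsCoprime u' v' := Polynomial.Separable.isCoprime (hsep.of_dvd huv_dvd)
  -- Hensel lifts
  obtain ⟨G, W, hGm, hWm, hφG, hφW, hGW⟩ :=
    hensel (monic_Xk4 hk) hg'm hw'm (by rw [φ_Xk k, hgw]) hcop_gw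
  obtain ⟨U, V, hUm, hVm, hφU, hφV, hUV⟩ :=
    hensel hWm hu'm hv'm (by rw [hφW, hw_uv]) hcop_uv
  set F : Polynomial (ZMod 4) := G * U with hF
  have hφF : φ F = f' := by rw [hF, map_mul, hφG, hφU, ← hfu]
  have hFm : F.Monic := hGm.mul hUm
  have hGF : G ∣ F := ⟨U, rfl⟩
  have hFX : F ∣ (X ^ k - 1 : Polynomial (ZMod 4)) := ⟨V, by rw [hGW, hUV, hF]; ring⟩
  have hFV : F * V = X ^ k - 1 := by rw [hF, mul_assoc, ← hUV, ← hGW]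
  -- step: 2*G ∈ J
  have h2G : 2 * G ∈ J := by
    have : g' ∈ Km := Submodule.IsPrincipal.generator_mem Km
    obtain ⟨κ, hκK, hκ⟩ := (Ideal.mem_map_iff_of_surjective φ φ_surj).1 this
    have h2κ : 2 * κ ∈ J := (hmemK κ).1 hκK
    have : 2 * G = 2 * κ := two_mul_eq_of_φ_eq (by rw [hφG, hκ])
    rw [this]; exact h2κ
  -- step: F ∈ J and F + 2G ∈ J
  have hFJ : F ∈ J := by
    have : f' ∈ Jm := Submodule.IsPrincipal.generator_mem Jm
    obtain ⟨a₀, ha₀J, ha₀⟩ := (Ideal.mem_map_iff_of_surjective φ φ_surj).1 this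
    -- a₀ = F + 2c
    obtain ⟨c, hc⟩ := L2 (show φ (a₀ - F) = 0 by rw [map_sub, ha₀, hφF, sub_self])
    -- V * a₀ - (X^k-1) = 2 * (V*c) ∈ J
    have h2Vc : 2 * (V * c) ∈ J := by
      have hval : 2 * (V * c) = V * a₀ - (X ^ k - 1) := by
        have : a₀ = F + 2 * c := by rw [← hc]; ring
        rw [this]; rw [mul_add, ← hFV]; ring
      rw [hval]
      exact Submodule.sub_mem J (Ideal.mul_mem_left J V ha₀J) hX
    have hVcK : V * c ∈ K := (hmemK _).2 h2Vc
    have hdvd : g' ∣ φ c * v' := by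
      have : φ (V * c) ∈ Km := Ideal.mem_map_of_mem φ hVcK
      rw [hKmSpan, Ideal.mem_span_singleton, map_mul, hφV, mul_comm] at this
      exact this
    have hcop_gv : IsCoprime g' v' := hcop_gw.of_isCoprime_of_dvd_right ⟨u', by rw [hw_uv]; ring⟩
    have hgc : g' ∣ φ c := hcop_gv.dvd_of_dvd_mul_right hdvd
    obtain ⟨s', hs'⟩ := hgc
    obtain ⟨s, hs⟩ := φ_surj s'
    have h2c : 2 * c = 2 * (G * s) := two_mul_eq_of_φ_eq (by rw [map_mul, hφG, hs, ← hs'])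
    have ha₀' : a₀ = F + (2 * G) * s := by
      have h1 : a₀ = F + 2 * c := by rw [← hc]; ring
      rw [h1, h2c]; ring
    have : F = a₀ - (2 * G) * s := by rw [ha₀']; ring
    rw [this]
    exact Submodule.sub_mem J ha₀J (J.mul_mem_right s h2G)
  have hFG2J : F + 2 * G ∈ J := Submodule.add_mem J hFJ h2G
  -- decomposition of arbitrary elements of J
  have hdecomp : ∀ b ∈ J, ∃ s t : Polynomial (ZMod 4),
      b = s * (F + 2 * G) + t * ((X : Polynomial (ZMod 4)) ^ k - 1) := by
    intro b hbJ
    -- φ b = f' * q'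
    have hbJm : φ b ∈ Jm := Ideal.mem_map_of_mem φ hbJ
    rw [hJmSpan, Ideal.mem_span_singleton] at hbJm
    obtain ⟨q', hq'⟩ := hbJm
    obtain ⟨q, hq⟩ := φ_surj q'
    obtain ⟨d, hd⟩ := L2 (show φ (b - q * F) = 0 by
      rw [map_sub, map_mul, hq, hφF, hq', sub_eq_zero]; ring)
    have h2dJ : 2 * d ∈ J := by
      rw [← hd]
      exact Submodule.sub_mem J hbJ (J.mul_mem_left q hFJ)
    have hdK : d ∈ K := (hmemK _).2 h2dJ
    have hgd : g' ∣ φ d := by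
      have : φ d ∈ Km := Ideal.mem_map_of_mem φ hdK
      rw [hKmSpan, Ideal.mem_span_singleton] at this
      exact this
    obtain ⟨r', hr'⟩ := hgd
    obtain ⟨r, hr⟩ := φ_surj r'
    have h2d : 2 * d = 2 * (G * r) := two_mul_eq_of_φ_eq (by rw [map_mul, hφG, hr, ← hr'])
    -- b = q*F + 2*G*r ; then express in terms of F + 2G
    have hb : b = q * F + r * (2 * G) := by
      have : b = q * F + 2 * d := by rw [← hd]; ring
      rw [this, h2d]; ring
    -- 2*G ∈ span {F + 2G, X^k-1} explicitly:
    -- A*U + B*V = 1 + 2t₀; 2G = A*(2F) + B*(2GV) ; 2F = 2*(F+2G); 2GV = V*(F+2G) - (X^k-1)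
    obtain ⟨A', B', hAB⟩ := hcop_uv
    obtain ⟨A, hA⟩ := φ_surj A'
    obtain ⟨B, hB⟩ := φ_surj B'
    obtain ⟨t₀, ht₀⟩ := L2 (show φ (A * U + B * V - 1) = 0 by
      rw [map_sub, map_add, map_mul, map_mul, hA, hB, hφU, hφV, map_one, hAB, sub_self])
    have h2GU : 2 * (G * U) = 2 * F := by rw [hF]
    have key2G : 2 * G = A * (2 * F) + B * (V * (F + 2 * G) - (X ^ k - 1)) := by
      have e1 : V * (F + 2 * G) - (X ^ k - 1) = 2 * (G * V) := by
        rw [mul_add, ← hFV]; ring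
      rw [e1, ← h2GU]
      have e2 : A * (2 * (G * U)) + B * (2 * (G * V)) = (2 * G) * (A * U + B * V) := by ring
      rw [e2, show A * U + B * V = 1 + 2 * t₀ by rw [← ht₀]; ring]
      have e3 : 2 * G * (1 + 2 * t₀) = 2 * G + (2 * 2) * (G * t₀) := by ring
      rw [e3, show ((2 : Polynomial (ZMod 4)) * 2) = 4 by norm_num, four_poly_eq_zero]
      ring
    have h4G : (2:Polynomial (ZMod 4)) * (2 * G) = 0 := by
      rw [show (2:Polynomial (ZMod 4)) * (2 * G) = 4 * G by ring, four_poly_eq_zero, zero_mul]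
    have h2F' : 2 * F = 2 * (F + 2 * G) := by
      rw [mul_add, h4G, add_zero]
    have hFP : F = (1 - 2*A - B*V) * (F + 2*G) + B * ((X:Polynomial (ZMod 4))^k - 1) := by
      linear_combination -key2G - A * h2F'
    have h2GP : 2 * G = (2*A + B*V) * (F + 2*G) - B * ((X:Polynomial (ZMod 4))^k - 1) := by
      linear_combination key2G + A * h2F'
    refine ⟨q * (1 - 2*A - B*V) + r * (2*A + B*V), (q - r) * B, ?_⟩
    linear_combination hb + q * hFP + r * h2GP
  -- conclude
  refine ⟨F, G, hFm, hGm, hGF, hFX, ?_⟩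
  ext c
  constructor
  · intro hc
    obtain ⟨b, hb⟩ := Ideal.Quotient.mk_surjective (I := I) c
    have hbJ : b ∈ J := by rw [hmemJ, hb]; exact hc
    obtain ⟨s, t, hst⟩ := hdecomp b hbJ
    rw [Submodule.mem_span_singleton]
    refine ⟨s, ?_⟩
    have : (s • (Ideal.Quotient.mk I (F + 2 * G)) : R4 k) = Ideal.Quotient.mk I (s * (F + 2 * G)) := rfl
    rw [this, ← hb, hst, map_add]
    have ht0 : (Ideal.Quotient.mk I (t * ((X : Polynomial (ZMod 4)) ^ k - 1)) : R4 k) = 0 := by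
      rw [Ideal.Quotient.eq_zero_iff_mem]
      exact Ideal.mul_mem_left I t hXI
    rw [ht0, add_zero]
  · intro hc
    rw [Submodule.mem_span_singleton] at hc
    obtain ⟨s, hs⟩ := hc
    rw [← hs]
    exact Submodule.smul_mem N s ((hmemJ _).1 hFG2J)

end

/-- Every GQC code `C` of odd block lengths `(m₁,…,m_l)` over `ℤ/4`, identified with a
`(ℤ/4)[x]`-submodule of `R = ∏ᵢ (ℤ/4)[x]/(x^{m_i}-1)`, has an upper-triangular
normalized generating set `a₁,…,a_l` with `a_i = (F_{i,1}|…|F_{i,i}|0|…|0)` and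
diagonal entries `F_{i,i} = f_{i,i} + 2 g_{i,i}` where `f_{i,i}, g_{i,i}` are monic
with `g_{i,i} ∣ f_{i,i} ∣ x^{m_i} - 1`. -/
theorem normalized_generating_set (l : ℕ) (m : Fin l → ℕ) (hm : ∀ i, Odd (m i))
    (Ccode : Submodule (Polynomial (ZMod 4)) (∀ i, R4 (m i))) :
    ∃ F : Fin l → Fin l → Polynomial (ZMod 4),
      Ccode = Submodule.span (Polynomial (ZMod 4))
          (Set.range fun i => (fun j => Ideal.Quotient.mk _ (F i j) : ∀ j, R4 (m j))) ∧
      (∀ i j, i < j → F i j = 0) ∧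
      (∀ i, ∃ f g : Polynomial (ZMod 4), f.Monic ∧ g.Monic ∧ g ∣ f ∧
        f ∣ X ^ (m i : ℕ) - 1 ∧ F i i = f + 2 * g) := by
  classical
  -- the submodule of tuples vanishing above i
  let Z : Fin l → Submodule (Polynomial (ZMod 4)) (∀ j, R4 (m j)) := fun i =>
    { carrier := {c | ∀ j, i < j → c j = 0}
      add_mem' := fun {c d} hc hd j hj => by
        show c j + d j = 0
        rw [hc j hj, hd j hj, add_zero]
      zero_mem' := fun j _ => rfl
      smul_mem' := fun p c hc j hj => by
        show p • c j = 0
        rw [hc j hj, smul_zero] }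
  have hZmem : ∀ i (c : ∀ j, R4 (m j)), c ∈ Z i ↔ ∀ j, i < j → c j = 0 := fun i c => Iff.rfl
  let D : Fin l → Submodule (Polynomial (ZMod 4)) (∀ j, R4 (m j)) := fun i => Ccode ⊓ Z i
  let prj : (i : Fin l) → ((∀ j, R4 (m j)) →ₗ[Polynomial (ZMod 4)] R4 (m i)) := fun i =>
    LinearMap.proj i
  let N : (i : Fin l) → Submodule (Polynomial (ZMod 4)) (R4 (m i)) := fun i =>
    Submodule.map (prj i) (D i)
  have hNi := fun i => ideal_structure (hm i) (N i)
  choose f g hfm hgm hgf hfX hNspan using hNi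
  -- pick a_i ∈ D i projecting onto the generator
  have ha : ∀ i, ∃ a ∈ D i, a i = Ideal.Quotient.mk _ (f i + 2 * g i) := by
    intro i
    have : (Ideal.Quotient.mk _ (f i + 2 * g i) : R4 (m i)) ∈ N i := by
      rw [hNspan i]
      exact Submodule.mem_span_singleton_self _
    obtain ⟨a, haD, haproj⟩ := this
    exact ⟨a, haD, haproj⟩
  choose a haD haproj using ha
  -- the generator matrix
  let F : Fin l → Fin l → Polynomial (ZMod 4) := fun i j =>
    if h : j = i then f i + 2 * g i
    else if j < i then (Ideal.Quotient.mk_surjective (a i j)).choose else 0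
  have hgen : ∀ i, (fun j => Ideal.Quotient.mk _ (F i j) : ∀ j, R4 (m j)) = a i := by
    intro i
    funext j
    rcases eq_or_ne j i with hji | hji
    · subst hji
      simp only [F, dif_pos rfl]
      exact (haproj j).symm
    · rcases lt_or_gt_of_ne hji with hlt | hgt
      · simp only [F, dif_neg hji, if_pos hlt]
        exact (Ideal.Quotient.mk_surjective (a i j)).choose_spec
      · simp only [F, dif_neg hji, if_neg (not_lt.2 hgt.le)]
        have := ((hZmem i (a i)).1 (haD i).2) j hgt
        rw [this, map_zero]
  refine ⟨F, ?_, ?_, ?_⟩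
  · -- Ccode = span of generators
    apply le_antisymm
    · -- hard direction via downward induction
      have key : ∀ n : ℕ, ∀ c ∈ Ccode, (∀ j : Fin l, n ≤ (j : ℕ) → c j = 0) →
          c ∈ Submodule.span (Polynomial (ZMod 4))
            (Set.range fun i => (fun j => Ideal.Quotient.mk _ (F i j) : ∀ j, R4 (m j))) := by
        intro n
        induction n with
        | zero =>
          intro c _ hc
          have : c = 0 := funext fun j => hc j (Nat.zero_le _)
          rw [this]; exact Submodule.zero_mem _
        | succ n ih =>
          intro c hcC hc
          by_cases hnl : n < l
          · set i : Fin l := ⟨n, hnl⟩ with hi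
            have hcD : c ∈ D i := ⟨hcC, fun j hj => hc j (by exact_mod_cast hj)⟩
            have hciN : c i ∈ N i := ⟨c, hcD, rfl⟩
            rw [hNspan i, Submodule.mem_span_singleton] at hciN
            obtain ⟨p, hp⟩ := hciN
            have hgenmem : (fun j => Ideal.Quotient.mk _ (F i j) : ∀ j, R4 (m j)) ∈
                Submodule.span (Polynomial (ZMod 4))
                  (Set.range fun i => (fun j => Ideal.Quotient.mk _ (F i j) : ∀ j, R4 (m j))) :=
              Submodule.subset_span ⟨i, rfl⟩
            have hsub : c - p • (fun j => Ideal.Quotient.mk _ (F i j) : ∀ j, R4 (m j)) ∈ Ccode := by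
              refine Submodule.sub_mem _ hcC (Submodule.smul_mem _ _ ?_)
              rw [hgen i]
              exact (haD i).1
            have hzero : ∀ j : Fin l, n ≤ (j : ℕ) →
                (c - p • (fun j => Ideal.Quotient.mk _ (F i j) : ∀ j, R4 (m j))) j = 0 := by
              intro j hj
              rcases eq_or_lt_of_le hj with heq | hlt
              · have hij : j = i := Fin.ext heq.symm
                rw [hij]
                show c i - p • (Ideal.Quotient.mk _ (F i i)) = 0
                have hFii : F i i = f i + 2 * g i := dif_pos rfl
                rw [hFii, hp, sub_self]
              · have hcj : c j = 0 := hc j hlt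
                have hjne : j ≠ i := by
                  intro h
                  rw [h] at hlt
                  exact lt_irrefl _ hlt
                have hjnlt : ¬ j < i := by
                  rw [Fin.lt_def, not_lt]
                  exact le_of_lt hlt
                have hFij : F i j = 0 := by
                  show (if h : j = i then f i + 2 * g i
                    else if j < i then (Ideal.Quotient.mk_surjective (a i j)).choose else 0) = 0
                  rw [dif_neg hjne, if_neg hjnlt]
                show c j - p • (Ideal.Quotient.mk _ (F i j)) = 0
                rw [hFij, map_zero, smul_zero, hcj, sub_zero]
            have := ih _ hsub hzero
            have hfinal : c = (c - p • (fun j => Ideal.Quotient.mk _ (F i j) : ∀ j, R4 (m j)))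
                + p • (fun j => Ideal.Quotient.mk _ (F i j) : ∀ j, R4 (m j)) := (sub_add_cancel _ _).symm
            rw [hfinal]
            exact Submodule.add_mem _ this (Submodule.smul_mem _ _ hgenmem)
          · exact ih c hcC fun j hj =>
              absurd (lt_of_lt_of_le j.isLt (not_lt.1 hnl)) (not_lt.2 hj)
      intro c hc
      exact key l c hc fun j hj => absurd j.isLt (not_lt.2 hj)
    · rw [Submodule.span_le]
      rintro x ⟨i, rfl⟩
      show (fun j => Ideal.Quotient.mk _ (F i j) : ∀ j, R4 (m j)) ∈ Ccode
      rw [hgen i]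
      exact (haD i).1
  · intro i j hij
    simp only [F]
    rw [dif_neg (ne_of_gt hij), if_neg (not_lt.2 hij.le)]
  · intro i
    exact ⟨f i, g i, hfm i, hgm i, hgf i, hfX i, by simp only [F, dif_pos rfl]⟩
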